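/- Let G be a connected cubic (3-regular) bipartite simple graph on n vertices, and let e' = {u', w'} and e'' = {u'', w''} be two edges of G sharing no endpoint such that deleting e' and e'' disconnects G into exactly two connected components, with vertex sets V1 (of size n1) containing u' and u'' and V2 (of size n2) containing w' and w''. Assume u' and u'' are not adjacent in G and w' and w'' are not adjacent in G. Let H1 be the induced subgraph of G on V1 together with the added edge e1 = {u', u''}, and let H2 be the induced subgraph of G on V2 together with the added edge e2 = {w', w''}. Suppose that for i = 1, 2 there exist a bijection f_i : V_i → Fin n_i and a proper edge 3-coloring c_i of H_i such that no two edges of the same color cross with respect to f_i, and moreover c_1(e1) = c_2(e2). Then there exist a bijection f : V(G) → Fin n and a proper edge 3-coloring c of G such that no two edges of the same color cross with respect to f. -/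

import Mathlib

/-- Given an injective placement of vertices on the spine, edges with endpoint
positions `a, b` and `x, y` (all four endpoints distinct) *cross* iff exactly one of
`x`, `y` lies strictly between `a` and `b` in the natural order on `Fin m`. -/
def EdgesCross {m : ℕ} (a b x y : Fin m) : Prop :=
  Xor' ((a < x ∧ x < b) ∨ (b < x ∧ x < a)) ((a < y ∧ y < b) ∨ (b < y ∧ y < a))


def NCross (a b x y : ℕ) : Prop :=
  Xor' ((a < x ∧ x < b) ∨ (b < x ∧ x < a)) ((a < y ∧ y < b) ∨ (b < y ∧ y < a))

set_option maxHeartbeats 2000000 in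
lemma NCross_rot {m a b x y c : ℕ} (ha : a < m) (hb : b < m) (hx : x < m) (hy : y < m)
    (hc : c < m) (hax : a ≠ x) (hay : a ≠ y) (hbx : b ≠ x) (hby : b ≠ y)
    (hxy : x ≠ y) :
    NCross ((a+c)%m) ((b+c)%m) ((x+c)%m) ((y+c)%m) ↔ NCross a b x y := by
  have key : ∀ t : ℕ, t < m → (t+c)%m = if t+c < m then t+c else t+c-m := by
    intro t ht
    split
    · exact Nat.mod_eq_of_lt ‹_›
    · rw [Nat.mod_eq_sub_mod (by omega)]
      exact Nat.mod_eq_of_lt (by omega)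
  rw [key a ha, key b hb, key x hx, key y hy]
  simp only [NCross, Xor', Xor]
  split_ifs <;> omega

lemma NCross_flip {a b x y : ℕ} (hax : a ≠ x) (hay : a ≠ y) (hbx : b ≠ x)
    (hby : b ≠ y) : NCross a b x y ↔ NCross x y a b := by
  simp only [NCross, Xor', Xor]; omega

lemma NCross_swab {a b x y : ℕ} : NCross a b x y ↔ NCross b a x y := by
  simp only [NCross, Xor', Xor]; omega

lemma NCross_swxy {a b x y : ℕ} : NCross a b x y ↔ NCross a b y x := by
  simp only [NCross, Xor', Xor]; omega

lemma NCross_adj {a b x y : ℕ} (hadj : b = a + 1) (hxa : x ≠ a) (hxb : x ≠ b)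
    (hya : y ≠ a) (hyb : y ≠ b) : ¬ NCross a b x y ∧ ¬ NCross x y a b := by
  simp only [NCross, Xor', Xor]; omega

lemma NCross_addk {k a b x y : ℕ} : NCross a b x y ↔ NCross (k+a) (k+b) (k+x) (k+y) := by
  simp only [NCross, Xor', Xor]; omega

lemma edgesCross_iff_ncross {m : ℕ} (a b x y : Fin m) :
    EdgesCross a b x y ↔ NCross a.val b.val x.val y.val := Iff.rfl

set_option maxHeartbeats 1000000 in

/-- With `G`, the two-edge cutset `{e', e''}` and the halves
`H1 = G[V1] + u'u''`, `H2 = G[V2] + w'w''` as in the main construction: if each `H_i`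
admits a vertex bijection `f_i : V_i ≃ Fin n_i` and a proper edge 3-coloring `c_i`
with no two same-colored edges crossing, and `c1(u'u'') = c2(w'w'')`, then `G` admits
a vertex bijection `f : V ≃ Fin n` and a proper edge 3-coloring with no two
same-colored edges crossing (a dispersable book embedding in 3 pages). -/
theorem combined_dispersable_book_embedding
    {V : Type*} [Fintype V] [DecidableEq V]
    (G : SimpleGraph V) [DecidableRel G.Adj]
    (hconn : G.Connected) (hreg : G.IsRegularOfDegree 3)
    (b : V → Bool) (hb : ∀ ⦃x y : V⦄, G.Adj x y → b x ≠ b y)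
    (u' w' u'' w'' : V)
    (he' : G.Adj u' w') (he'' : G.Adj u'' w'')
    (hshare : ({u', w'} : Set V) ∩ ({u'', w''} : Set V) = ∅)
    (V1 V2 : Finset V)
    (hu' : u' ∈ V1) (hu'' : u'' ∈ V1) (hw' : w' ∈ V2) (hw'' : w'' ∈ V2)
    (hV12 : Disjoint V1 V2) (hcover : V1 ∪ V2 = Finset.univ)
    (hV1conn : ∀ x ∈ V1, ∀ y ∈ V1,
      (G.deleteEdges {s(u', w'), s(u'', w'')}).Reachable x y)
    (hV2conn : ∀ x ∈ V2, ∀ y ∈ V2,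
      (G.deleteEdges {s(u', w'), s(u'', w'')}).Reachable x y)
    (hsep : ¬ (G.deleteEdges {s(u', w'), s(u'', w'')}).Reachable u' w')
    (hnadj1 : ¬ G.Adj u' u'') (hnadj2 : ¬ G.Adj w' w'')
    (H1 : SimpleGraph ↥(V1 : Set V))
    (hH1 : H1 = G.induce (V1 : Set V) ⊔
      SimpleGraph.fromEdgeSet {s((⟨u', hu'⟩ : ↥(V1 : Set V)), (⟨u'', hu''⟩ : ↥(V1 : Set V)))})
    (H2 : SimpleGraph ↥(V2 : Set V))
    (hH2 : H2 = G.induce (V2 : Set V) ⊔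
      SimpleGraph.fromEdgeSet {s((⟨w', hw'⟩ : ↥(V2 : Set V)), (⟨w'', hw''⟩ : ↥(V2 : Set V)))})
    (f1 : ↥(V1 : Set V) ≃ Fin V1.card)
    (c1 : Sym2 ↥(V1 : Set V) → Fin 3)
    (hc1proper : ∀ ⦃x y z : ↥(V1 : Set V)⦄, H1.Adj x y → H1.Adj x z → y ≠ z →
      c1 s(x, y) ≠ c1 s(x, z))
    (hc1cross : ∀ ⦃p q x y : ↥(V1 : Set V)⦄, H1.Adj p q → H1.Adj x y →
      p ≠ x → p ≠ y → q ≠ x → q ≠ y → c1 s(p, q) = c1 s(x, y) →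
      ¬ EdgesCross (f1 p) (f1 q) (f1 x) (f1 y))
    (f2 : ↥(V2 : Set V) ≃ Fin V2.card)
    (c2 : Sym2 ↥(V2 : Set V) → Fin 3)
    (hc2proper : ∀ ⦃x y z : ↥(V2 : Set V)⦄, H2.Adj x y → H2.Adj x z → y ≠ z →
      c2 s(x, y) ≠ c2 s(x, z))
    (hc2cross : ∀ ⦃p q x y : ↥(V2 : Set V)⦄, H2.Adj p q → H2.Adj x y →
      p ≠ x → p ≠ y → q ≠ x → q ≠ y → c2 s(p, q) = c2 s(x, y) →
      ¬ EdgesCross (f2 p) (f2 q) (f2 x) (f2 y))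
    (hsamecolor : c1 s(⟨u', hu'⟩, ⟨u'', hu''⟩) = c2 s(⟨w', hw'⟩, ⟨w'', hw''⟩)) :
    ∃ (f : V ≃ Fin (Fintype.card V)) (c : Sym2 V → Fin 3),
      (∀ ⦃x y z : V⦄, G.Adj x y → G.Adj x z → y ≠ z → c s(x, y) ≠ c s(x, z)) ∧
      (∀ ⦃p q x y : V⦄, G.Adj p q → G.Adj x y →
        p ≠ x → p ≠ y → q ≠ x → q ≠ y → c s(p, q) = c s(x, y) →
        ¬ EdgesCross (f p) (f q) (f x) (f y)) := by
  classical
  have hss := Set.eq_empty_iff_forall_notMem.mp hshare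
  have hne1 : u' ≠ u'' := fun h => hss u' ⟨by simp, by simp [h]⟩
  have hne2 : u' ≠ w'' := fun h => hss u' ⟨by simp, by simp [h]⟩
  have hne3 : w' ≠ u'' := fun h => hss w' ⟨by simp, by simp [h]⟩
  have hne4 : w' ≠ w'' := fun h => hss w' ⟨by simp, by simp [h]⟩
  have hmem : ∀ v : V, v ∈ V1 ∨ v ∈ V2 := fun v =>
    Finset.mem_union.mp (by rw [hcover]; exact Finset.mem_univ v)
  have hnot12 : ∀ v : V, v ∈ V1 → v ∉ V2 := fun v h1 h2 =>
    (Finset.disjoint_left.mp hV12) h1 h2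
  have hn : V1.card + V2.card = Fintype.card V := by
    rw [← Finset.card_union_of_disjoint hV12, hcover, Finset.card_univ]
  have hn1 : 2 ≤ V1.card := Finset.one_lt_card.mpr ⟨u', hu', u'', hu'', hne1⟩
  have hn2 : 2 ≤ V2.card := Finset.one_lt_card.mpr ⟨w', hw', w'', hw'', hne4⟩
  haveI : NeZero V1.card := ⟨by omega⟩
  haveI : NeZero V2.card := ⟨by omega⟩
  -- the rotated layouts
  let g1 : ↥(V1 : Set V) ≃ Fin V1.card :=
    f1.trans (Equiv.addRight ((⟨V1.card - 1, by omega⟩ : Fin V1.card) - f1 ⟨u'', hu''⟩))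
  let g2 : ↥(V2 : Set V) ≃ Fin V2.card := f2.trans (Equiv.addRight (-(f2 ⟨w'', hw''⟩)))
  let eSplit : V ≃ (↥(V1 : Set V) ⊕ ↥(V2 : Set V)) :=
    { toFun := fun v => if h : v ∈ V1 then .inl ⟨v, h⟩
        else .inr ⟨v, Finset.mem_coe.mpr ((hmem v).resolve_left h)⟩
      invFun := Sum.elim (fun a => a.1) (fun a => a.1)
      left_inv := by intro v; by_cases h : v ∈ V1 <;> simp [h]
      right_inv := by
        rintro (⟨v, hv⟩ | ⟨v, hv⟩)
        · simp [Finset.mem_coe.mp hv]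
        · have hv1 : v ∉ V1 := fun h => hnot12 v h (Finset.mem_coe.mp hv)
          simp [hv1] }
  let f : V ≃ Fin (Fintype.card V) :=
    eSplit.trans ((g1.sumCongr g2).trans (finSumFinEquiv.trans (finCongr hn)))
  set C1 := ((⟨V1.card - 1, by omega⟩ : Fin V1.card) - f1 ⟨u'', hu''⟩).val with hC1
  set C2 := (-(f2 ⟨w'', hw''⟩)).val with hC2
  have hfval1 : ∀ (v : V) (h : v ∈ V1), (f v).val = ((f1 ⟨v, h⟩).val + C1) % V1.card := by
    intro v h
    rw [hC1]
    simp [f, eSplit, g1, h, Fin.add_def]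
  have hfval2 : ∀ (v : V) (h : v ∈ V2),
      (f v).val = V1.card + (((f2 ⟨v, h⟩).val + C2) % V2.card) := by
    intro v h
    have hv1 : v ∉ V1 := fun hh => hnot12 v hh h
    rw [hC2]
    simp [f, eSplit, g2, hv1, Fin.add_def]
  have hvalu'' : (f u'').val = V1.card - 1 := by
    rw [hfval1 u'' hu'']
    have : f1 ⟨u'', hu''⟩ + ((⟨V1.card - 1, by omega⟩ : Fin V1.card) - f1 ⟨u'', hu''⟩)
        = (⟨V1.card - 1, by omega⟩ : Fin V1.card) := add_sub_cancel _ _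
    have := congrArg Fin.val this
    rw [Fin.add_def] at this
    rw [hC1]
    exact this
  have hvalw'' : (f w'').val = V1.card := by
    rw [hfval2 w'' hw'']
    have : f2 ⟨w'', hw''⟩ + (-(f2 ⟨w'', hw''⟩)) = 0 := add_neg_cancel _
    have := congrArg Fin.val this
    rw [Fin.add_def] at this
    rw [hC2]
    simpa using this
  have hlt1 : ∀ (v : V) (h : v ∈ V1), (f v).val < V1.card := by
    intro v h; rw [hfval1 v h]; exact Nat.mod_lt _ (by omega)
  have hge2 : ∀ (v : V) (h : v ∈ V2), V1.card ≤ (f v).val := by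
    intro v h; rw [hfval2 v h]; omega
  have pne : ∀ {a b : V}, a ≠ b → (f a).val ≠ (f b).val :=
    fun hab hv => hab (f.injective (Fin.val_injective hv))
  -- adjacency in the halves
  have hH1adj : ∀ {x y : V} (hx : x ∈ V1) (hy : y ∈ V1), G.Adj x y →
      H1.Adj ⟨x, hx⟩ ⟨y, hy⟩ := by
    intro x y hx hy hadj
    rw [hH1, SimpleGraph.sup_adj]
    exact Or.inl hadj
  have hH2adj : ∀ {x y : V} (hx : x ∈ V2) (hy : y ∈ V2), G.Adj x y →
      H2.Adj ⟨x, hx⟩ ⟨y, hy⟩ := by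
    intro x y hx hy hadj
    rw [hH2, SimpleGraph.sup_adj]
    exact Or.inl hadj
  have hH1e : H1.Adj ⟨u', hu'⟩ ⟨u'', hu''⟩ := by
    rw [hH1, SimpleGraph.sup_adj]
    right
    rw [SimpleGraph.fromEdgeSet_adj]
    exact ⟨rfl, fun h => hne1 (congrArg Subtype.val h)⟩
  have hH2e : H2.Adj ⟨w', hw'⟩ ⟨w'', hw''⟩ := by
    rw [hH2, SimpleGraph.sup_adj]
    right
    rw [SimpleGraph.fromEdgeSet_adj]
    exact ⟨rfl, fun h => hne4 (congrArg Subtype.val h)⟩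
  -- classification of edges of G
  have classify : ∀ ⦃x y : V⦄, G.Adj x y →
      (x ∈ V1 ∧ y ∈ V1) ∨ (x ∈ V2 ∧ y ∈ V2) ∨
      s(x, y) = s(u', w') ∨ s(x, y) = s(u'', w'') := by
    intro x y hadj
    by_cases hx : x ∈ V1 <;> by_cases hy : y ∈ V1
    · exact Or.inl ⟨hx, hy⟩
    · have hy2 : y ∈ V2 := (hmem y).resolve_left hy
      by_cases hsp : s(x, y) = s(u', w') ∨ s(x, y) = s(u'', w'')
      · exact Or.inr (Or.inr hsp)
      push_neg at hsp
      exfalso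
      have hdel : (G.deleteEdges {s(u', w'), s(u'', w'')}).Adj x y := by
        rw [SimpleGraph.deleteEdges_adj]
        refine ⟨hadj, ?_⟩
        simp only [Set.mem_insert_iff, Set.mem_singleton_iff]
        push_neg
        exact hsp
      exact hsep (((hV1conn u' hu' x hx).trans hdel.reachable).trans
        (hV2conn y hy2 w' hw'))
    · have hx2 : x ∈ V2 := (hmem x).resolve_left hx
      by_cases hsp : s(x, y) = s(u', w') ∨ s(x, y) = s(u'', w'')
      · exact Or.inr (Or.inr hsp)
      push_neg at hsp
      exfalso
      have hdel : (G.deleteEdges {s(u', w'), s(u'', w'')}).Adj x y := by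
        rw [SimpleGraph.deleteEdges_adj]
        refine ⟨hadj, ?_⟩
        simp only [Set.mem_insert_iff, Set.mem_singleton_iff]
        push_neg
        exact hsp
      exact hsep (((hV1conn u' hu' y hy).trans hdel.symm.reachable).trans
        (hV2conn x hx2 w' hw'))
    · exact Or.inr (Or.inl ⟨(hmem x).resolve_left hx, (hmem y).resolve_left hy⟩)
  -- the coloring
  set κ : Fin 3 := c1 s(⟨u', hu'⟩, ⟨u'', hu''⟩) with hκ
  let cfun : V → V → Fin 3 := fun x y =>
    if hx : x ∈ V1 then
      (if hy : y ∈ V1 then c1 s(⟨x, hx⟩, ⟨y, hy⟩) else κ)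
    else
      (if hy : y ∈ V1 then κ
       else c2 s(⟨x, Finset.mem_coe.mpr ((hmem x).resolve_left hx)⟩,
                 ⟨y, Finset.mem_coe.mpr ((hmem y).resolve_left hy)⟩))
  have csymm : ∀ x y : V, cfun x y = cfun y x := by
    intro x y
    by_cases hx : x ∈ V1 <;> by_cases hy : y ∈ V1 <;>
      simp only [cfun, hx, hy, dif_pos, dif_neg, not_false_iff] <;>
      first
        | rfl
        | rw [Sym2.eq_swap]
  let c : Sym2 V → Fin 3 := Sym2.lift ⟨cfun, csymm⟩
  have hceval : ∀ x y : V, c s(x, y) = cfun x y := fun x y => rfl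
  have hc11 : ∀ {a b : V} (ha : a ∈ V1) (hb : b ∈ V1),
      c s(a, b) = c1 s(⟨a, ha⟩, ⟨b, hb⟩) := by
    intro a b ha hb
    rw [hceval]
    simp only [cfun, ha, hb, dif_pos]
  have hc22 : ∀ {a b : V} (ha : a ∈ V2) (hb : b ∈ V2),
      c s(a, b) = c2 s(⟨a, ha⟩, ⟨b, hb⟩) := by
    intro a b ha hb
    have ha1 : a ∉ V1 := fun h => hnot12 a h ha
    have hb1 : b ∉ V1 := fun h => hnot12 b h hb
    rw [hceval]
    simp only [cfun, ha1, hb1, dif_neg, not_false_iff]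
  have hc12 : ∀ {a b : V}, a ∈ V1 → b ∈ V2 → c s(a, b) = κ := by
    intro a b ha hb
    have hb1 : b ∉ V1 := fun h => hnot12 b h hb
    rw [hceval]
    simp only [cfun, ha, hb1, dif_pos, dif_neg, not_false_iff]
  have hc21 : ∀ {a b : V}, a ∈ V2 → b ∈ V1 → c s(a, b) = κ := by
    intro a b ha hb
    have ha1 : a ∉ V1 := fun h => hnot12 a h ha
    rw [hceval]
    simp only [cfun, ha1, hb, dif_pos, dif_neg, not_false_iff]
  -- no other κ-colored edges at the cut vertices
  have hA : ∀ {y : V} (hy : y ∈ V1), G.Adj u' y → c1 s(⟨u', hu'⟩, ⟨y, hy⟩) ≠ κ := by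
    intro y hy hadj
    have hyu'' : (⟨y, hy⟩ : ↥(V1 : Set V)) ≠ ⟨u'', hu''⟩ := by
      intro h
      apply hnadj1
      have hyy : y = u'' := congrArg Subtype.val h
      rwa [hyy] at hadj
    exact hc1proper (hH1adj hu' hy hadj) hH1e hyu''
  have hB : ∀ {y : V} (hy : y ∈ V1), G.Adj u'' y → c1 s(⟨u'', hu''⟩, ⟨y, hy⟩) ≠ κ := by
    intro y hy hadj
    have hyu' : (⟨y, hy⟩ : ↥(V1 : Set V)) ≠ ⟨u', hu'⟩ := by
      intro h
      apply hnadj1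
      have hyy : y = u' := congrArg Subtype.val h
      rw [hyy] at hadj
      exact hadj.symm
    have := hc1proper (hH1adj hu'' hy hadj) (hH1e.symm) hyu'
    rw [hκ, Sym2.eq_swap (a := (⟨u', hu'⟩ : ↥(V1 : Set V)))]
    exact this
  have hκ2 : κ = c2 s(⟨w', hw'⟩, ⟨w'', hw''⟩) := hsamecolor
  have hC : ∀ {y : V} (hy : y ∈ V2), G.Adj w' y → c2 s(⟨w', hw'⟩, ⟨y, hy⟩) ≠ κ := by
    intro y hy hadj
    have hyw'' : (⟨y, hy⟩ : ↥(V2 : Set V)) ≠ ⟨w'', hw''⟩ := by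
      intro h
      apply hnadj2
      have hyy : y = w'' := congrArg Subtype.val h
      rwa [hyy] at hadj
    rw [hκ2]
    exact hc2proper (hH2adj hw' hy hadj) hH2e hyw''
  have hD : ∀ {y : V} (hy : y ∈ V2), G.Adj w'' y → c2 s(⟨w'', hw''⟩, ⟨y, hy⟩) ≠ κ := by
    intro y hy hadj
    have hyw' : (⟨y, hy⟩ : ↥(V2 : Set V)) ≠ ⟨w', hw'⟩ := by
      intro h
      apply hnadj2
      have hyy : y = w' := congrArg Subtype.val h
      rw [hyy] at hadj
      exact hadj.symm
    have := hc2proper (hH2adj hw'' hy hadj) (hH2e.symm) hyw'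
    rw [hκ2, Sym2.eq_swap (a := (⟨w', hw'⟩ : ↥(V2 : Set V)))]
    exact this
  -- crossing helper: both edges inside V1
  have noCross11 : ∀ {p q x y : V} (hp : p ∈ V1) (hq : q ∈ V1) (hx : x ∈ V1)
      (hy : y ∈ V1), G.Adj p q → G.Adj x y → p ≠ x → p ≠ y → q ≠ x → q ≠ y →
      c1 s(⟨p, hp⟩, ⟨q, hq⟩) = c1 s(⟨x, hx⟩, ⟨y, hy⟩) →
      ¬ NCross (f p).val (f q).val (f x).val (f y).val := by
    intro p q x y hp hq hx hy hpq hxy hpx hpy hqx hqy hcol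
    have sne : ∀ {a b : V} (ha : a ∈ V1) (hb : b ∈ V1), a ≠ b →
        (⟨a, ha⟩ : ↥(V1 : Set V)) ≠ ⟨b, hb⟩ :=
      fun _ _ hab h => hab (congrArg Subtype.val h)
    have fne : ∀ {a b : V} (ha : a ∈ V1) (hb : b ∈ V1), a ≠ b →
        (f1 ⟨a, ha⟩).val ≠ (f1 ⟨b, hb⟩).val :=
      fun ha hb hab hv => hab (congrArg Subtype.val
        (f1.injective (Fin.val_injective hv)))
    have h1 : ¬ NCross (f1 ⟨p, hp⟩).val (f1 ⟨q, hq⟩).val (f1 ⟨x, hx⟩).val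
        (f1 ⟨y, hy⟩).val :=
      hc1cross (hH1adj hp hq hpq) (hH1adj hx hy hxy) (sne hp hx hpx)
        (sne hp hy hpy) (sne hq hx hqx) (sne hq hy hqy) hcol
    have h2 : ¬ NCross (((f1 ⟨p, hp⟩).val + C1) % V1.card) (((f1 ⟨q, hq⟩).val + C1) % V1.card)
        (((f1 ⟨x, hx⟩).val + C1) % V1.card) (((f1 ⟨y, hy⟩).val + C1) % V1.card) := fun hh =>
      h1 ((NCross_rot (Fin.is_lt _) (Fin.is_lt _) (Fin.is_lt _) (Fin.is_lt _)
        (Fin.is_lt _) (fne hp hx hpx) (fne hp hy hpy) (fne hq hx hqx)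
        (fne hq hy hqy) (fne hx hy hxy.ne)).mp hh)
    rw [← hfval1 p hp, ← hfval1 q hq, ← hfval1 x hx, ← hfval1 y hy] at h2
    exact h2
  have noCross22 : ∀ {p q x y : V} (hp : p ∈ V2) (hq : q ∈ V2) (hx : x ∈ V2)
      (hy : y ∈ V2), G.Adj p q → G.Adj x y → p ≠ x → p ≠ y → q ≠ x → q ≠ y →
      c2 s(⟨p, hp⟩, ⟨q, hq⟩) = c2 s(⟨x, hx⟩, ⟨y, hy⟩) →
      ¬ NCross (f p).val (f q).val (f x).val (f y).val := by
    intro p q x y hp hq hx hy hpq hxy hpx hpy hqx hqy hcol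
    have sne : ∀ {a b : V} (ha : a ∈ V2) (hb : b ∈ V2), a ≠ b →
        (⟨a, ha⟩ : ↥(V2 : Set V)) ≠ ⟨b, hb⟩ :=
      fun _ _ hab h => hab (congrArg Subtype.val h)
    have fne : ∀ {a b : V} (ha : a ∈ V2) (hb : b ∈ V2), a ≠ b →
        (f2 ⟨a, ha⟩).val ≠ (f2 ⟨b, hb⟩).val :=
      fun ha hb hab hv => hab (congrArg Subtype.val
        (f2.injective (Fin.val_injective hv)))
    have h1 : ¬ NCross (f2 ⟨p, hp⟩).val (f2 ⟨q, hq⟩).val (f2 ⟨x, hx⟩).val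
        (f2 ⟨y, hy⟩).val :=
      hc2cross (hH2adj hp hq hpq) (hH2adj hx hy hxy) (sne hp hx hpx)
        (sne hp hy hpy) (sne hq hx hqx) (sne hq hy hqy) hcol
    have h2 : ¬ NCross (((f2 ⟨p, hp⟩).val + C2) % V2.card) (((f2 ⟨q, hq⟩).val + C2) % V2.card)
        (((f2 ⟨x, hx⟩).val + C2) % V2.card) (((f2 ⟨y, hy⟩).val + C2) % V2.card) := fun hh =>
      h1 ((NCross_rot (Fin.is_lt _) (Fin.is_lt _) (Fin.is_lt _) (Fin.is_lt _)
        (Fin.is_lt _) (fne hp hx hpx) (fne hp hy hpy) (fne hq hx hqx)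
        (fne hq hy hqy) (fne hx hy hxy.ne)).mp hh)
    have h3 : ¬ NCross (V1.card + ((f2 ⟨p, hp⟩).val + C2) % V2.card)
        (V1.card + ((f2 ⟨q, hq⟩).val + C2) % V2.card) (V1.card + ((f2 ⟨x, hx⟩).val + C2) % V2.card)
        (V1.card + ((f2 ⟨y, hy⟩).val + C2) % V2.card) := fun hh => h2 (NCross_addk.mpr hh)
    rw [← hfval2 p hp, ← hfval2 q hq, ← hfval2 x hx, ← hfval2 y hy] at h3
    exact h3
  -- crossing helper: one edge in V1, one in V2
  have noCross12 : ∀ {p q x y : V}, p ∈ V1 → q ∈ V1 → x ∈ V2 → y ∈ V2 →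
      ¬ NCross (f p).val (f q).val (f x).val (f y).val := by
    intro p q x y hp hq hx hy
    have h1 := hlt1 p hp
    have h2 := hlt1 q hq
    have h3 := hge2 x hx
    have h4 := hge2 y hy
    simp only [NCross, Xor', Xor]
    omega
  -- crossing helper: the edge u''w'' crosses nothing
  have noCrossE'' : ∀ {x y : V}, x ≠ u'' → x ≠ w'' → y ≠ u'' → y ≠ w'' →
      ¬ NCross (f u'').val (f w'').val (f x).val (f y).val ∧
      ¬ NCross (f x).val (f y).val (f u'').val (f w'').val := by
    intro x y hx1 hx2 hy1 hy2
    exact NCross_adj (by rw [hvalu'', hvalw'']; omega) (pne hx1) (pne hx2)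
      (pne hy1) (pne hy2)
  -- crossing helper: u'w' versus a κ-colored edge inside V1
  have keyE'1 : ∀ {x y : V} (hx : x ∈ V1) (hy : y ∈ V1), G.Adj x y →
      x ≠ u' → y ≠ u' → c1 s(⟨x, hx⟩, ⟨y, hy⟩) = κ →
      ¬ NCross (f u').val (f w').val (f x).val (f y).val := by
    intro x y hx hy hxy hxu hyu hcol
    have hxu'' : x ≠ u'' := by
      intro h
      subst h
      exact hB hy hxy hcol
    have hyu'' : y ≠ u'' := by
      intro h
      subst h
      rw [Sym2.eq_swap] at hcol
      exact hB hx hxy.symm hcol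
    have sne : ∀ {a b : V} (ha : a ∈ V1) (hb : b ∈ V1), a ≠ b →
        (⟨a, ha⟩ : ↥(V1 : Set V)) ≠ ⟨b, hb⟩ :=
      fun _ _ hab h => hab (congrArg Subtype.val h)
    have fne : ∀ {a b : V} (ha : a ∈ V1) (hb : b ∈ V1), a ≠ b →
        (f1 ⟨a, ha⟩).val ≠ (f1 ⟨b, hb⟩).val :=
      fun ha hb hab hv => hab (congrArg Subtype.val
        (f1.injective (Fin.val_injective hv)))
    have h1 : ¬ NCross (f1 ⟨u', hu'⟩).val (f1 ⟨u'', hu''⟩).val (f1 ⟨x, hx⟩).val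
        (f1 ⟨y, hy⟩).val :=
      hc1cross hH1e (hH1adj hx hy hxy) (sne hu' hx (Ne.symm hxu))
        (sne hu' hy (Ne.symm hyu)) (sne hu'' hx (Ne.symm hxu''))
        (sne hu'' hy (Ne.symm hyu'')) hcol.symm
    have h2 : ¬ NCross (((f1 ⟨u', hu'⟩).val + C1) % V1.card)
        (((f1 ⟨u'', hu''⟩).val + C1) % V1.card) (((f1 ⟨x, hx⟩).val + C1) % V1.card)
        (((f1 ⟨y, hy⟩).val + C1) % V1.card) := fun hh =>
      h1 ((NCross_rot (Fin.is_lt _) (Fin.is_lt _) (Fin.is_lt _) (Fin.is_lt _)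
        (Fin.is_lt _) (fne hu' hx (Ne.symm hxu)) (fne hu' hy (Ne.symm hyu))
        (fne hu'' hx (Ne.symm hxu'')) (fne hu'' hy (Ne.symm hyu''))
        (fne hx hy hxy.ne)).mp hh)
    rw [← hfval1 u' hu', ← hfval1 u'' hu'', ← hfval1 x hx, ← hfval1 y hy] at h2
    have b1 := hlt1 u' hu'
    have b2 := hlt1 x hx
    have b3 := hlt1 y hy
    have b4 := hge2 w' hw'
    have d1 := pne hne1
    have d2 := pne hxu''
    have d3 := pne hyu''
    have d4 := pne hxy.ne
    have d5 := pne (Ne.symm hxu)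
    have d6 := pne (Ne.symm hyu)
    simp only [NCross, Xor', Xor] at h2 ⊢
    omega
  -- crossing helper: u'w' versus a κ-colored edge inside V2
  have keyE'2 : ∀ {x y : V} (hx : x ∈ V2) (hy : y ∈ V2), G.Adj x y →
      x ≠ w' → y ≠ w' → c2 s(⟨x, hx⟩, ⟨y, hy⟩) = κ →
      ¬ NCross (f u').val (f w').val (f x).val (f y).val := by
    intro x y hx hy hxy hxw hyw hcol
    have hxw'' : x ≠ w'' := by
      intro h
      subst h
      exact hD hy hxy hcol
    have hyw'' : y ≠ w'' := by
      intro h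
      subst h
      rw [Sym2.eq_swap] at hcol
      exact hD hx hxy.symm hcol
    have sne : ∀ {a b : V} (ha : a ∈ V2) (hb : b ∈ V2), a ≠ b →
        (⟨a, ha⟩ : ↥(V2 : Set V)) ≠ ⟨b, hb⟩ :=
      fun _ _ hab h => hab (congrArg Subtype.val h)
    have fne : ∀ {a b : V} (ha : a ∈ V2) (hb : b ∈ V2), a ≠ b →
        (f2 ⟨a, ha⟩).val ≠ (f2 ⟨b, hb⟩).val :=
      fun ha hb hab hv => hab (congrArg Subtype.val
        (f2.injective (Fin.val_injective hv)))
    have h1 : ¬ NCross (f2 ⟨w', hw'⟩).val (f2 ⟨w'', hw''⟩).val (f2 ⟨x, hx⟩).val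
        (f2 ⟨y, hy⟩).val :=
      hc2cross hH2e (hH2adj hx hy hxy) (sne hw' hx (Ne.symm hxw))
        (sne hw' hy (Ne.symm hyw)) (sne hw'' hx (Ne.symm hxw''))
        (sne hw'' hy (Ne.symm hyw'')) (by rw [← hκ2]; exact hcol.symm)
    have h2 : ¬ NCross (((f2 ⟨w', hw'⟩).val + C2) % V2.card)
        (((f2 ⟨w'', hw''⟩).val + C2) % V2.card) (((f2 ⟨x, hx⟩).val + C2) % V2.card)
        (((f2 ⟨y, hy⟩).val + C2) % V2.card) := fun hh =>
      h1 ((NCross_rot (Fin.is_lt _) (Fin.is_lt _) (Fin.is_lt _) (Fin.is_lt _)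
        (Fin.is_lt _) (fne hw' hx (Ne.symm hxw)) (fne hw' hy (Ne.symm hyw))
        (fne hw'' hx (Ne.symm hxw'')) (fne hw'' hy (Ne.symm hyw''))
        (fne hx hy hxy.ne)).mp hh)
    have h3 : ¬ NCross (V1.card + ((f2 ⟨w', hw'⟩).val + C2) % V2.card)
        (V1.card + ((f2 ⟨w'', hw''⟩).val + C2) % V2.card)
        (V1.card + ((f2 ⟨x, hx⟩).val + C2) % V2.card)
        (V1.card + ((f2 ⟨y, hy⟩).val + C2) % V2.card) := fun hh => h2 (NCross_addk.mpr hh)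
    rw [← hfval2 w' hw', ← hfval2 w'' hw'', ← hfval2 x hx, ← hfval2 y hy] at h3
    have b1 := hlt1 u' hu'
    have b2 := hge2 x hx
    have b3 := hge2 y hy
    have b4 := hge2 w' hw'
    have b5 := hvalw''
    have d1 := pne hne4
    have d2 := pne hxw''
    have d3 := pne hyw''
    have d4 := pne hxy.ne
    have d5 := pne (Ne.symm hxw)
    have d6 := pne (Ne.symm hyw)
    simp only [NCross, Xor', Xor] at h3 ⊢
    omega
  -- u'w' versus u''w''
  have keyE'E'' : ¬ NCross (f u').val (f w').val (f u'').val (f w'').val :=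
    (noCrossE'' hne1 hne2 hne3 hne4).2
  refine ⟨f, c, ?_, ?_⟩
  · -- properness
    intro x y z hxy hxz hyz
    have sne1 : ∀ {a b : V} (ha : a ∈ V1) (hb : b ∈ V1), a ≠ b →
        (⟨a, ha⟩ : ↥(V1 : Set V)) ≠ ⟨b, hb⟩ :=
      fun _ _ hab h => hab (congrArg Subtype.val h)
    have sne2 : ∀ {a b : V} (ha : a ∈ V2) (hb : b ∈ V2), a ≠ b →
        (⟨a, ha⟩ : ↥(V2 : Set V)) ≠ ⟨b, hb⟩ :=
      fun _ _ hab h => hab (congrArg Subtype.val h)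
    rcases classify hxy with ⟨hx1, hy1⟩ | ⟨hx2, hy2⟩ | hs | hs
    · rcases classify hxz with ⟨hx1', hz1⟩ | ⟨hx2', hz2⟩ | hs' | hs'
      · rw [hc11 hx1 hy1, hc11 hx1' hz1]
        exact hc1proper (hH1adj hx1 hy1 hxy) (hH1adj hx1' hz1 hxz)
          (sne1 hy1 hz1 hyz)
      · exact absurd hx2' (hnot12 x hx1)
      · rcases Sym2.eq_iff.mp hs' with ⟨rfl, rfl⟩ | ⟨rfl, rfl⟩
        · rw [hc11 hx1 hy1, hc12 hx1 hw']
          exact hA hy1 hxy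
        · exact absurd hx1 (fun h => hnot12 _ h hw')
      · rcases Sym2.eq_iff.mp hs' with ⟨rfl, rfl⟩ | ⟨rfl, rfl⟩
        · rw [hc11 hx1 hy1, hc12 hx1 hw'']
          exact hB hy1 hxy
        · exact absurd hx1 (fun h => hnot12 _ h hw'')
    · rcases classify hxz with ⟨hx1', hz1⟩ | ⟨hx2', hz2⟩ | hs' | hs'
      · exact absurd hx2 (hnot12 x hx1')
      · rw [hc22 hx2 hy2, hc22 hx2' hz2]
        exact hc2proper (hH2adj hx2 hy2 hxy) (hH2adj hx2' hz2 hxz)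
          (sne2 hy2 hz2 hyz)
      · rcases Sym2.eq_iff.mp hs' with ⟨rfl, rfl⟩ | ⟨rfl, rfl⟩
        · exact absurd hu' (fun h => hnot12 _ h hx2)
        · rw [hc22 hx2 hy2, hc21 hx2 hu']
          exact hC hy2 hxy
      · rcases Sym2.eq_iff.mp hs' with ⟨rfl, rfl⟩ | ⟨rfl, rfl⟩
        · exact absurd hu'' (fun h => hnot12 _ h hx2)
        · rw [hc22 hx2 hy2, hc21 hx2 hu'']
          exact hD hy2 hxy
    · rcases classify hxz with ⟨hx1', hz1⟩ | ⟨hx2', hz2⟩ | hs' | hs'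
      · rcases Sym2.eq_iff.mp hs with ⟨rfl, rfl⟩ | ⟨rfl, rfl⟩
        · rw [hc12 hx1' hw', hc11 hx1' hz1]
          exact (hA hz1 hxz).symm
        · exact absurd hx1' (fun h => hnot12 _ h hw')
      · rcases Sym2.eq_iff.mp hs with ⟨rfl, rfl⟩ | ⟨rfl, rfl⟩
        · exact absurd hu' (fun h => hnot12 _ h hx2')
        · rw [hc21 hx2' hu', hc22 hx2' hz2]
          exact (hC hz2 hxz).symm
      · rcases Sym2.eq_iff.mp hs with ⟨rfl, rfl⟩ | ⟨rfl, rfl⟩ <;>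
          rcases Sym2.eq_iff.mp hs' with ⟨he1, he2⟩ | ⟨he1, he2⟩
        · exact absurd he2.symm hyz
        · exact absurd he1 (G.ne_of_adj he')
        · exact absurd he1 (G.ne_of_adj he').symm
        · exact absurd he2.symm hyz
      · rcases Sym2.eq_iff.mp hs with ⟨rfl, rfl⟩ | ⟨rfl, rfl⟩ <;>
          rcases Sym2.eq_iff.mp hs' with ⟨he1, he2⟩ | ⟨he1, he2⟩
        · exact absurd he1 hne1
        · exact absurd he1 hne2
        · exact absurd he1 hne3
        · exact absurd he1 hne4
    · rcases classify hxz with ⟨hx1', hz1⟩ | ⟨hx2', hz2⟩ | hs' | hs'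
      · rcases Sym2.eq_iff.mp hs with ⟨rfl, rfl⟩ | ⟨rfl, rfl⟩
        · rw [hc12 hx1' hw'', hc11 hx1' hz1]
          exact (hB hz1 hxz).symm
        · exact absurd hx1' (fun h => hnot12 _ h hw'')
      · rcases Sym2.eq_iff.mp hs with ⟨rfl, rfl⟩ | ⟨rfl, rfl⟩
        · exact absurd hu'' (fun h => hnot12 _ h hx2')
        · rw [hc21 hx2' hu'', hc22 hx2' hz2]
          exact (hD hz2 hxz).symm
      · rcases Sym2.eq_iff.mp hs with ⟨rfl, rfl⟩ | ⟨rfl, rfl⟩ <;>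
          rcases Sym2.eq_iff.mp hs' with ⟨he1, he2⟩ | ⟨he1, he2⟩
        · exact absurd he1.symm hne1
        · exact absurd he1.symm hne3
        · exact absurd he1.symm hne2
        · exact absurd he1.symm hne4
      · rcases Sym2.eq_iff.mp hs with ⟨rfl, rfl⟩ | ⟨rfl, rfl⟩ <;>
          rcases Sym2.eq_iff.mp hs' with ⟨he1, he2⟩ | ⟨he1, he2⟩
        · exact absurd he2.symm hyz
        · exact absurd he1 (G.ne_of_adj he'')
        · exact absurd he1 (G.ne_of_adj he'').symm
        · exact absurd he2.symm hyz
  · -- crossing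
    intro p q x y hpq hxy hpx hpy hqx hqy hcol
    rw [edgesCross_iff_ncross]
    rcases classify hpq with ⟨hp1, hq1⟩ | ⟨hp2, hq2⟩ | hs | hs
    · rcases classify hxy with ⟨hx1, hy1⟩ | ⟨hx2, hy2⟩ | hs' | hs'
      · -- V1 vs V1
        refine noCross11 hp1 hq1 hx1 hy1 hpq hxy hpx hpy hqx hqy ?_
        rw [← hc11 hp1 hq1, ← hc11 hx1 hy1]
        exact hcol
      · exact noCross12 hp1 hq1 hx2 hy2
      · -- (x,y) is the edge u'w'
        have hcol' : c1 s(⟨p, hp1⟩, ⟨q, hq1⟩) = κ := by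
          rw [← hc11 hp1 hq1, hcol, hs', hc12 hu' hw']
        rcases Sym2.eq_iff.mp hs' with ⟨rfl, rfl⟩ | ⟨rfl, rfl⟩
        · rw [NCross_flip (pne hpx) (pne hpy) (pne hqx) (pne hqy)]
          exact keyE'1 hp1 hq1 hpq hpx hqx hcol'
        · rw [NCross_swxy, NCross_flip (pne hpy) (pne hpx) (pne hqy) (pne hqx)]
          exact keyE'1 hp1 hq1 hpq hpy hqy hcol'
      · rcases Sym2.eq_iff.mp hs' with ⟨rfl, rfl⟩ | ⟨rfl, rfl⟩
        · exact (noCrossE'' hpx hpy hqx hqy).2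
        · rw [NCross_swxy]
          exact (noCrossE'' hpy hpx hqy hqx).2
    · rcases classify hxy with ⟨hx1, hy1⟩ | ⟨hx2, hy2⟩ | hs' | hs'
      · rw [NCross_flip (pne hpx) (pne hpy) (pne hqx) (pne hqy)]
        exact noCross12 hx1 hy1 hp2 hq2
      · refine noCross22 hp2 hq2 hx2 hy2 hpq hxy hpx hpy hqx hqy ?_
        rw [← hc22 hp2 hq2, ← hc22 hx2 hy2]
        exact hcol
      · have hcol' : c2 s(⟨p, hp2⟩, ⟨q, hq2⟩) = κ := by
          rw [← hc22 hp2 hq2, hcol, hs', hc12 hu' hw']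
        rcases Sym2.eq_iff.mp hs' with ⟨rfl, rfl⟩ | ⟨rfl, rfl⟩
        · rw [NCross_flip (pne hpx) (pne hpy) (pne hqx) (pne hqy)]
          exact keyE'2 hp2 hq2 hpq hpy hqy hcol'
        · rw [NCross_swxy, NCross_flip (pne hpy) (pne hpx) (pne hqy) (pne hqx)]
          exact keyE'2 hp2 hq2 hpq hpx hqx hcol'
      · rcases Sym2.eq_iff.mp hs' with ⟨rfl, rfl⟩ | ⟨rfl, rfl⟩
        · exact (noCrossE'' hpx hpy hqx hqy).2
        · rw [NCross_swxy]
          exact (noCrossE'' hpy hpx hqy hqx).2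
    · -- (p,q) is the edge u'w'
      have hcolκ : c s(x, y) = κ := by rw [← hcol, hs, hc12 hu' hw']
      rcases classify hxy with ⟨hx1, hy1⟩ | ⟨hx2, hy2⟩ | hs' | hs'
      · have hcol' : c1 s(⟨x, hx1⟩, ⟨y, hy1⟩) = κ := by rw [← hc11 hx1 hy1]; exact hcolκ
        rcases Sym2.eq_iff.mp hs with ⟨rfl, rfl⟩ | ⟨rfl, rfl⟩
        · exact keyE'1 hx1 hy1 hxy hpx.symm hpy.symm hcol'
        · rw [NCross_swab]
          exact keyE'1 hx1 hy1 hxy hqx.symm hqy.symm hcol'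
      · have hcol' : c2 s(⟨x, hx2⟩, ⟨y, hy2⟩) = κ := by rw [← hc22 hx2 hy2]; exact hcolκ
        rcases Sym2.eq_iff.mp hs with ⟨rfl, rfl⟩ | ⟨rfl, rfl⟩
        · exact keyE'2 hx2 hy2 hxy hqx.symm hqy.symm hcol'
        · rw [NCross_swab]
          exact keyE'2 hx2 hy2 hxy hpx.symm hpy.symm hcol'
      · rcases Sym2.eq_iff.mp hs with ⟨rfl, rfl⟩ | ⟨rfl, rfl⟩ <;>
          rcases Sym2.eq_iff.mp hs' with ⟨he1, he2⟩ | ⟨he1, he2⟩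
        · exact absurd he1.symm hpx
        · exact absurd he2.symm hpy
        · exact absurd he2.symm hpy
        · exact absurd he1.symm hpx
      · rcases Sym2.eq_iff.mp hs with ⟨rfl, rfl⟩ | ⟨rfl, rfl⟩ <;>
          rcases Sym2.eq_iff.mp hs' with ⟨rfl, rfl⟩ | ⟨rfl, rfl⟩
        · exact keyE'E''
        · rw [NCross_swxy]; exact keyE'E''
        · rw [NCross_swab]; exact keyE'E''
        · rw [NCross_swab, NCross_swxy]; exact keyE'E''
    · -- (p,q) is the edge u''w''
      rcases Sym2.eq_iff.mp hs with ⟨rfl, rfl⟩ | ⟨rfl, rfl⟩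
      · exact (noCrossE'' hpx.symm hqx.symm hpy.symm hqy.symm).1
      · rw [NCross_swab]
        exact (noCrossE'' hqx.symm hpx.symm hqy.symm hpy.symm).1
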